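/- Let m ∈ ℕ and a ∈ [0,1). If f(z) = ∑_{n≥m} a_n zⁿ is analytic on 𝔻 with ‖f‖_∞ ≤ 1 and |a_m| = a, then for every 0 ≤ r ≤ 1 − ((1+a)/(2+a))^{1/(m+1)} one has ∑_{n≥m} C(n,m) |a_n| r^{n−m} ≤ 1. -/

import Mathlib

open Metric Filter

section BohrAux

open FormalMultilinearSeries Complex

lemma myCoeff (c : ℕ → ℂ) (n : ℕ) :
    (FormalMultilinearSeries.ofScalars ℂ c).coeff n = c n := by
  show (FormalMultilinearSeries.ofScalars ℂ c n) (fun _ => 1) = c n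
  rw [FormalMultilinearSeries.ofScalars_apply_eq]
  simp

lemma myRep {c : ℕ → ℂ} {g : ℂ → ℂ}
    (h : ∀ z ∈ Metric.ball (0:ℂ) 1, HasSum (fun n => c n * z ^ n) (g z)) :
    HasFPowerSeriesOnBall g (FormalMultilinearSeries.ofScalars ℂ c) 0 1 := by
  set p := FormalMultilinearSeries.ofScalars ℂ c with hp
  have hrad : 1 ≤ p.radius := by
    refine ENNReal.le_of_forall_nnreal_lt fun r hr => ?_
    have hz : (r : ℂ) ∈ Metric.ball (0:ℂ) 1 := by
      simp only [mem_ball, dist_zero_right, Complex.norm_real]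
      calc |(r:ℝ)| = (r:ℝ) := _root_.abs_of_nonneg r.coe_nonneg
        _ < 1 := by exact_mod_cast hr
    have hs := (h _ hz).summable
    have ht : Tendsto (fun n => ‖p n‖ * (r:ℝ) ^ n) atTop (nhds 0) := by
      have h2 : Tendsto (fun n => ‖c n * (r:ℂ) ^ n‖) atTop (nhds 0) := by
        simpa using hs.tendsto_atTop_zero.norm
      refine h2.congr fun n => ?_
      simp [hp, FormalMultilinearSeries.ofScalars_norm, norm_mul, norm_pow,
        _root_.abs_of_nonneg r.coe_nonneg, myCoeff]
    exact p.le_radius_of_tendsto ht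
  have hpos : (0:ENNReal) < p.radius := lt_of_lt_of_le one_pos hrad
  have h1 : HasFPowerSeriesOnBall p.sum p 0 1 :=
    (p.hasFPowerSeriesOnBall hpos).mono one_pos hrad
  refine h1.congr fun z hz => ?_
  have hz' : z ∈ Metric.ball (0:ℂ) 1 := by
    have h1 := Metric.emetric_ball_nnreal (x := (0:ℂ)) (ε := 1)
    simp only [ENNReal.coe_one, NNReal.coe_one] at h1
    rw [h1] at hz; exact hz
  have h2 : HasSum (fun n => p n fun _ => z) (p.sum z) :=
    p.hasSum (lt_of_lt_of_le (by exact hz) hrad)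
  have h3 : HasSum (fun n => c n * z ^ n) (p.sum z) :=
    h2.congr_fun fun n => by
      simp [hp, FormalMultilinearSeries.ofScalars_apply_eq, smul_eq_mul, myCoeff, mul_comm]
  exact ((h z hz').unique h3).symm

lemma myBallEq : Metric.eball (0:ℂ) 1 = Metric.ball (0:ℂ) 1 := by
  simpa using Metric.emetric_ball_nnreal (x := (0:ℂ)) (ε := 1)

lemma myDiff {c : ℕ → ℂ} {g : ℂ → ℂ}
    (h : ∀ z ∈ Metric.ball (0:ℂ) 1, HasSum (fun n => c n * z ^ n) (g z)) :
    DifferentiableOn ℂ g (Metric.ball (0:ℂ) 1) := by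
  have := (myRep h).differentiableOn
  rwa [myBallEq] at this

lemma myCauchyBound {c : ℕ → ℂ} {g : ℂ → ℂ} {M : ℝ}
    (h : ∀ z ∈ Metric.ball (0:ℂ) 1, HasSum (fun n => c n * z ^ n) (g z))
    (hM : ∀ z ∈ Metric.ball (0:ℂ) 1, ‖g z‖ ≤ M) (n : ℕ) : ‖c n‖ ≤ M := by
  have hdiff := myDiff h
  have key : ∀ R : NNReal, 0 < (R:ℝ) → (R:ℝ) < 1 → ‖c n‖ * (R:ℝ) ^ n ≤ M := by
    intro R hρ0 hρ1
    have hsub : closedBall (0:ℂ) R ⊆ ball (0:ℂ) 1 := closedBall_subset_ball hρ1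
    have hball : HasFPowerSeriesOnBall g (cauchyPowerSeries g 0 R) 0 R :=
      (hdiff.mono hsub).hasFPowerSeriesOnBall (by exact_mod_cast hρ0)
    have heq : FormalMultilinearSeries.ofScalars ℂ c = cauchyPowerSeries g 0 R :=
      (myRep h).hasFPowerSeriesAt.eq_formalMultilinearSeries hball.hasFPowerSeriesAt
    have hnorm : ‖c n‖ = ‖cauchyPowerSeries g 0 R n‖ := by
      rw [← heq, FormalMultilinearSeries.ofScalars_norm]
    have hle := norm_cauchyPowerSeries_le g 0 R n
    have hmem : ∀ θ : ℝ, circleMap 0 R θ ∈ ball (0:ℂ) 1 := by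
      intro θ
      simp only [mem_ball, dist_zero_right, norm_circleMap_zero]
      rwa [_root_.abs_of_nonneg hρ0.le]
    have hc2 : Continuous fun θ : ℝ => ‖g (circleMap 0 R θ)‖ :=
      (hdiff.continuousOn.comp_continuous (continuous_circleMap 0 R) hmem).norm
    have hint : (2 * Real.pi)⁻¹ * ∫ θ : ℝ in (0)..2 * Real.pi,
        ‖g (circleMap 0 R θ)‖ ≤ M := by
      have h1 : ∫ θ : ℝ in (0)..2 * Real.pi, ‖g (circleMap 0 R θ)‖ ≤
          ∫ _ : ℝ in (0)..2 * Real.pi, M := by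
        refine intervalIntegral.integral_mono_on Real.two_pi_pos.le
          (hc2.intervalIntegrable _ _) (intervalIntegrable_const) ?_
        intro θ _
        exact hM _ (hmem θ)
      have h2 : ∫ _ : ℝ in (0)..2 * Real.pi, M = 2 * Real.pi * M := by simp [mul_comm]
      rw [h2] at h1
      calc (2 * Real.pi)⁻¹ * ∫ θ : ℝ in (0)..2 * Real.pi, ‖g (circleMap 0 R θ)‖
          ≤ (2 * Real.pi)⁻¹ * (2 * Real.pi * M) := by
            refine mul_le_mul_of_nonneg_left h1 (by positivity)
        _ = M := by field_simp
    calc ‖c n‖ * (R:ℝ) ^ n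
        ≤ ((2 * Real.pi)⁻¹ * ∫ θ : ℝ in (0)..2 * Real.pi, ‖g (circleMap 0 R θ)‖)
            * |(R:ℝ)|⁻¹ ^ n * (R:ℝ) ^ n := by
          refine mul_le_mul_of_nonneg_right ?_ (pow_nonneg hρ0.le n)
          rw [hnorm]; exact hle
      _ = ((2 * Real.pi)⁻¹ * ∫ θ : ℝ in (0)..2 * Real.pi, ‖g (circleMap 0 R θ)‖)
            * (((R:ℝ))⁻¹ * (R:ℝ)) ^ n := by
          rw [_root_.abs_of_nonneg hρ0.le, mul_assoc, ← mul_pow]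
      _ ≤ M := by
          rw [inv_mul_cancel₀ hρ0.ne', one_pow, mul_one]
          exact hint
  have hM0 : 0 ≤ M := le_trans (norm_nonneg _) (hM 0 (by simp))
  have hlim : Tendsto (fun ρ : ℝ => ‖c n‖ * ρ ^ n) (nhdsWithin 1 (Set.Iio 1)) (nhds (‖c n‖)) := by
    have : Tendsto (fun ρ : ℝ => ‖c n‖ * ρ ^ n) (nhds 1) (nhds (‖c n‖ * 1 ^ n)) :=
      (tendsto_id.pow n).const_mul _
    simpa using this.mono_left nhdsWithin_le_nhds
  refine le_of_tendsto hlim ?_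
  filter_upwards [Ioo_mem_nhdsLT_of_mem (by norm_num : (1:ℝ) ∈ Set.Ioc 0 1)] with ρ hρ
  have := key ρ.toNNReal (by simpa [Real.coe_toNNReal ρ hρ.1.le] using hρ.1)
    (by simpa [Real.coe_toNNReal ρ hρ.1.le] using hρ.2)
  simpa [Real.coe_toNNReal ρ hρ.1.le] using this

/-- Existence of the sum function for coefficients bounded by 1. -/
lemma mySumExists {b : ℕ → ℂ} (hb : ∀ n, ‖b n‖ ≤ 1) :
    ∃ g : ℂ → ℂ, ∀ z ∈ Metric.ball (0:ℂ) 1, HasSum (fun n => b n * z ^ n) (g z) := by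
  set q := FormalMultilinearSeries.ofScalars ℂ b with hq
  have hrad : 1 ≤ q.radius := by
    refine ENNReal.le_of_forall_nnreal_lt fun r hr => ?_
    have hr1 : (r:ℝ) < 1 := by exact_mod_cast hr
    refine q.le_radius_of_bound 1 fun n => ?_
    rw [hq, FormalMultilinearSeries.ofScalars_norm]
    calc ‖b n‖ * (r:ℝ) ^ n ≤ 1 * 1 ^ n := by
          refine mul_le_mul (hb n) (pow_le_pow_left₀ r.coe_nonneg hr1.le n) (by positivity) one_pos.le
      _ = 1 := by norm_num
  refine ⟨q.sum, fun z hz => ?_⟩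
  have hz0 : z ∈ Metric.eball (0:ℂ) 1 := by rw [myBallEq]; exact hz
  have hz' : z ∈ Metric.eball (0:ℂ) q.radius := Metric.eball_subset_eball hrad hz0
  have h2 : HasSum (fun n => q n fun _ => z) (q.sum z) := q.hasSum hz'
  exact h2.congr_fun fun n => by
    rw [hq, FormalMultilinearSeries.ofScalars_apply_eq, smul_eq_mul]

/-- L3: division by z^m keeping bound 1. -/
lemma myShift {c : ℕ → ℂ} {f : ℂ → ℂ} {m : ℕ}
    (h : ∀ z ∈ Metric.ball (0:ℂ) 1, HasSum (fun n => c n * z ^ n) (f z))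
    (hvan : ∀ n, n < m → c n = 0)
    (hbd : ∀ z ∈ Metric.ball (0:ℂ) 1, ‖f z‖ ≤ 1) :
    ∃ g : ℂ → ℂ, (∀ z ∈ Metric.ball (0:ℂ) 1, HasSum (fun n => c (n + m) * z ^ n) (g z)) ∧
      (∀ z ∈ Metric.ball (0:ℂ) 1, ‖g z‖ ≤ 1) := by
  have hcb : ∀ k, ‖c k‖ ≤ 1 := myCauchyBound h hbd
  obtain ⟨g, hg⟩ := mySumExists (b := fun n => c (n + m)) (fun n => hcb _)
  have hdiffg := myDiff hg
  -- identity z^m * g z = f z on the ball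
  have hid : ∀ z ∈ Metric.ball (0:ℂ) 1, z ^ m * g z = f z := by
    intro z hz
    have h1 : HasSum (fun n => c (n + m) * z ^ (n + m)) (f z - ∑ i ∈ Finset.range m, c i * z ^ i) :=
      (hasSum_nat_add_iff' m).mpr (h z hz)
    have h2 : (∑ i ∈ Finset.range m, c i * z ^ i) = 0 := by
      refine Finset.sum_eq_zero fun i hi => ?_
      rw [hvan i (Finset.mem_range.mp hi), zero_mul]
    rw [h2, sub_zero] at h1
    have h3 : HasSum (fun n => c (n + m) * z ^ (n + m)) (g z * z ^ m) := by
      refine ((hg z hz).mul_right (z ^ m)).congr_fun fun n => ?_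
      rw [pow_add]; ring
    rw [mul_comm]
    exact h3.unique h1
  refine ⟨g, hg, fun z hz => ?_⟩
  have hz1 : ‖z‖ < 1 := by simpa [mem_ball, dist_zero_right] using hz
  have key : ∀ ρ : ℝ, ‖z‖ < ρ → ρ < 1 → ‖g z‖ ≤ (ρ⁻¹) ^ m := by
    intro ρ hρz hρ1
    have hρ0 : 0 < ρ := lt_of_le_of_lt (norm_nonneg z) hρz
    have hsub : closure (ball (0:ℂ) ρ) ⊆ Metric.ball (0:ℂ) 1 := by
      rw [closure_ball (0:ℂ) hρ0.ne']
      exact closedBall_subset_ball hρ1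
    refine Complex.norm_le_of_forall_mem_frontier_norm_le isBounded_ball
      ((hdiffg.mono hsub).diffContOnCl) (fun w hw => ?_) ?_
    · rw [frontier_ball (0:ℂ) hρ0.ne'] at hw
      have hwn : ‖w‖ = ρ := by simpa [mem_sphere_iff_norm] using hw
      have hwb : w ∈ Metric.ball (0:ℂ) 1 := by
        simp only [mem_ball, dist_zero_right, hwn]; exact hρ1
      have := hbd w hwb
      rw [← hid w hwb, norm_mul, norm_pow, hwn] at this
      rw [inv_pow, ← one_div, le_div_iff₀ (by positivity : (0:ℝ) < ρ ^ m)]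
      calc ‖g w‖ * ρ ^ m = ρ ^ m * ‖g w‖ := by ring
        _ ≤ 1 := this
    · exact subset_closure (by simpa [mem_ball, dist_zero_right] using hρz)
  -- limit ρ → 1
  have hlim : Tendsto (fun ρ : ℝ => (ρ⁻¹) ^ m) (nhdsWithin 1 (Set.Iio 1)) (nhds 1) := by
    have : Tendsto (fun ρ : ℝ => (ρ⁻¹) ^ m) (nhds 1) (nhds (((1:ℝ)⁻¹) ^ m)) :=
      ((tendsto_id.inv₀ one_ne_zero).pow m)
    simpa using this.mono_left nhdsWithin_le_nhds
  refine ge_of_tendsto hlim ?_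
  filter_upwards [Ioo_mem_nhdsLT_of_mem (by constructor <;> [exact hz1; exact le_refl 1] :
    (1:ℝ) ∈ Set.Ioc ‖z‖ 1)] with ρ hρ
  exact key ρ hρ.1 hρ.2

/-- Schwarz--Pick coefficient bound: `‖b 1‖ ≤ 1 - ‖b 0‖ ^ 2`. -/
lemma mySchwarzPick {b : ℕ → ℂ} {g : ℂ → ℂ}
    (hg : ∀ z ∈ Metric.ball (0:ℂ) 1, HasSum (fun n => b n * z ^ n) (g z))
    (hbd : ∀ z ∈ Metric.ball (0:ℂ) 1, ‖g z‖ ≤ 1)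
    (hb0 : ‖b 0‖ < 1) :
    ‖b 1‖ ≤ 1 - ‖b 0‖ ^ 2 := by
  have hps := (myRep hg).hasFPowerSeriesAt
  have hg0 : g 0 = b 0 := by
    have h0 : HasSum (fun n => b n * (0:ℂ) ^ n) (b 0) := by
      have := hasSum_single (f := fun n => b n * (0:ℂ) ^ n) 0
        (fun n hn => by simp [zero_pow hn])
      simpa using this
    exact (hg 0 (by simp)).unique h0
  have hderiv : HasDerivAt g (b 1) 0 := by
    have h01 : ((FormalMultilinearSeries.ofScalars ℂ b 1) fun _ => 1) = b 1 := by
      rw [FormalMultilinearSeries.ofScalars_apply_eq]; simp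
    have := hps.hasDerivAt
    rwa [h01] at this
  set k := b 0 with hk
  have hknorm : ‖k‖ < 1 := hb0
  have hdiffg := myDiff hg
  -- denominator nonzero
  have hden : ∀ z ∈ Metric.ball (0:ℂ) 1, 1 - (starRingEnd ℂ) k * g z ≠ 0 := by
    intro z hz hcontra
    have h1 : ‖(starRingEnd ℂ) k * g z‖ ≤ ‖k‖ := by
      rw [norm_mul, RCLike.norm_conj]
      calc ‖k‖ * ‖g z‖ ≤ ‖k‖ * 1 := by
            exact mul_le_mul_of_nonneg_left (hbd z hz) (norm_nonneg _)
        _ = ‖k‖ := mul_one _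
    have h2 : (1:ℂ) = (starRingEnd ℂ) k * g z := by linear_combination hcontra
    have : (1:ℝ) ≤ ‖k‖ := by
      calc (1:ℝ) = ‖(1:ℂ)‖ := by simp
        _ = ‖(starRingEnd ℂ) k * g z‖ := by rw [h2]
        _ ≤ ‖k‖ := h1
    linarith
  set h : ℂ → ℂ := fun z => (g z - k) / (1 - (starRingEnd ℂ) k * g z) with hh
  -- key pointwise bound
  have hkey : ∀ u : ℂ, ‖u‖ ≤ 1 → ‖u - k‖ ≤ ‖1 - (starRingEnd ℂ) k * u‖ := by
    intro u hu
    have hid : ((Complex.normSq (1 - (starRingEnd ℂ) k * u) : ℂ))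
        - (Complex.normSq (u - k) : ℂ)
        = ((1:ℂ) - (Complex.normSq k : ℂ)) * (1 - (Complex.normSq u : ℂ)) := by
      rw [← Complex.mul_conj, ← Complex.mul_conj, ← Complex.mul_conj, ← Complex.mul_conj]
      simp only [map_sub, map_mul, map_one, Complex.conj_conj]
      ring
    have hreal : Complex.normSq (1 - (starRingEnd ℂ) k * u) - Complex.normSq (u - k)
        = (1 - Complex.normSq k) * (1 - Complex.normSq u) := by
      exact_mod_cast hid
    have h1 : Complex.normSq k ≤ 1 := by
      rw [Complex.normSq_eq_norm_sq]
      calc ‖k‖ ^ 2 ≤ 1 ^ 2 := by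
            refine pow_le_pow_left₀ (norm_nonneg k) ?_ 2
            exact le_of_lt hknorm
        _ = 1 := one_pow 2
    have h2 : Complex.normSq u ≤ 1 := by
      rw [Complex.normSq_eq_norm_sq]
      calc ‖u‖ ^ 2 ≤ 1 ^ 2 := by
            refine pow_le_pow_left₀ (norm_nonneg u) hu 2
        _ = 1 := one_pow 2
    have h3 : Complex.normSq (u - k) ≤ Complex.normSq (1 - (starRingEnd ℂ) k * u) := by
      nlinarith [hreal]
    calc ‖u - k‖ = Real.sqrt (Complex.normSq (u - k)) := by
          rw [Complex.norm_def]
      _ ≤ Real.sqrt (Complex.normSq (1 - (starRingEnd ℂ) k * u)) := Real.sqrt_le_sqrt h3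
      _ = ‖1 - (starRingEnd ℂ) k * u‖ := by rw [Complex.norm_def]
  have hmaps : ∀ z ∈ Metric.ball (0:ℂ) 1, ‖h z‖ ≤ 1 := by
    intro z hz
    rw [hh]
    simp only [norm_div]
    rw [div_le_one_iff]
    left
    constructor
    · rcases (norm_pos_iff).2 (hden z hz) with h'
      exact h'
    · exact hkey (g z) (hbd z hz)
  -- h is differentiable on the ball
  have hdiffh : DifferentiableOn ℂ h (Metric.ball (0:ℂ) 1) := by
    refine DifferentiableOn.div (hdiffg.sub_const k) ?_ hden
    exact (differentiableOn_const 1).sub (hdiffg.const_mul _)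
  have hh0 : h 0 = 0 := by
    rw [hh]; simp [hg0, ← hk]
  -- deriv h 0 = b 1 / (1 - normSq k)
  have hnsq : (Complex.normSq k : ℝ) < 1 := by
    rw [Complex.normSq_eq_norm_sq]
    calc ‖k‖^2 < 1^2 := by
          refine pow_lt_pow_left₀ hknorm (norm_nonneg k) (by norm_num)
      _ = 1 := one_pow 2
  have hne : (1:ℂ) - (Complex.normSq k : ℂ) ≠ 0 := by
    intro hcon
    have : ((Complex.normSq k : ℂ)) = 1 := by linear_combination -hcon
    have : (Complex.normSq k : ℝ) = 1 := by exact_mod_cast this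
    linarith
  have hderivh : HasDerivAt h (b 1 / (1 - (Complex.normSq k : ℂ))) 0 := by
    have hnum : HasDerivAt (fun z => g z - k) (b 1) 0 := hderiv.sub_const k
    have hden' : HasDerivAt (fun z => 1 - (starRingEnd ℂ) k * g z)
        (-((starRingEnd ℂ) k * b 1)) 0 := by
      have := (hderiv.const_mul ((starRingEnd ℂ) k)).const_sub 1
      simpa using this
    have hden0 : (1 : ℂ) - (starRingEnd ℂ) k * g 0 ≠ 0 := hden 0 (by simp)
    have := hnum.div hden' hden0
    refine this.congr_deriv (Eq.symm ?_)
    rw [hg0]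
    have hmc : (starRingEnd ℂ) k * k = (Complex.normSq k : ℂ) := by
      rw [mul_comm]; exact Complex.mul_conj k
    rw [sub_self, zero_mul, sub_zero, hmc, sq]
    rw [eq_div_iff (mul_ne_zero hne hne)]
    field_simp
  -- Schwarz lemma
  have hsch : ‖deriv h 0‖ ≤ 1 := by
    refine le_of_forall_gt_imp_ge_of_dense fun R₂ hR₂ => ?_
    have hmapsto : Set.MapsTo h (Metric.ball (0:ℂ) 1) (Metric.ball (h 0) R₂) := by
      intro z hz
      rw [hh0, mem_ball, dist_zero_right]
      exact lt_of_le_of_lt (hmaps z hz) hR₂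
    have := Complex.norm_deriv_le_div_of_mapsTo_ball hdiffh (hmapsto.mono_right Metric.ball_subset_closedBall) one_pos
    simpa using this
  rw [hderivh.deriv] at hsch
  rw [norm_div] at hsch
  have hd1 : ‖(1:ℂ) - (Complex.normSq k : ℂ)‖ = 1 - Complex.normSq k := by
    rw [show (1:ℂ) - (Complex.normSq k : ℂ) = ((1 - Complex.normSq k : ℝ) : ℂ) by push_cast; ring]
    rw [Complex.norm_real, Real.norm_eq_abs, _root_.abs_of_pos (by linarith)]
  rw [hd1, div_le_one (by linarith)] at hsch
  have : Complex.normSq k = ‖b 0‖ ^ 2 := by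
    rw [Complex.normSq_eq_norm_sq, hk]
  linarith [hsch, this.symm.le, this.le]

/-- Higher coefficient Schwarz--Pick bound via roots of unity. -/
lemma myHigherCoeff {b : ℕ → ℂ} {g : ℂ → ℂ}
    (hg : ∀ z ∈ Metric.ball (0:ℂ) 1, HasSum (fun n => b n * z ^ n) (g z))
    (hbd : ∀ z ∈ Metric.ball (0:ℂ) 1, ‖g z‖ ≤ 1)
    (hb0 : ‖b 0‖ < 1) (k : ℕ) (hk : 1 ≤ k) :
    ‖b k‖ ≤ 1 - ‖b 0‖ ^ 2 := by
  have hk0 : (k:ℕ) ≠ 0 := by omega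
  have hcb : ∀ n, ‖b n‖ ≤ 1 := myCauchyBound hg hbd
  set d : ℕ → ℂ := fun j => b (j * k) with hd
  obtain ⟨H, hH⟩ := mySumExists (b := d) (fun j => hcb _)
  set ω : ℂ := Complex.exp (2 * Real.pi * Complex.I / k) with hω
  have hprim : IsPrimitiveRoot ω k := Complex.isPrimitiveRoot_exp k hk0
  have hωk : ω ^ k = 1 := hprim.pow_eq_one
  have hωnorm : ‖ω‖ = 1 := by
    rw [hω, show (2 * Real.pi * Complex.I / k) = ((2 * Real.pi / k : ℝ)) * Complex.I by
      push_cast; ring]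
    exact Complex.norm_exp_ofReal_mul_I _
  -- H is bounded by 1 on the ball
  have hHbd : ∀ w ∈ Metric.ball (0:ℂ) 1, ‖H w‖ ≤ 1 := by
    intro w hw
    obtain ⟨z, hzw⟩ := IsAlgClosed.exists_pow_nat_eq w (n := k) (by omega)
    have hwn : ‖w‖ < 1 := by simpa [mem_ball, dist_zero_right] using hw
    have hzn : ‖z‖ < 1 := by
      by_contra hcon
      push_neg at hcon
      have : (1:ℝ) ≤ ‖z‖ ^ k := one_le_pow₀ hcon
      rw [← norm_pow, hzw] at this
      linarith
    have hmem : ∀ j : ℕ, ω ^ j * z ∈ Metric.ball (0:ℂ) 1 := by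
      intro j
      simp only [mem_ball, dist_zero_right, norm_mul, norm_pow, hωnorm, one_pow, one_mul]
      exact hzn
    -- sum of rotations
    have hS : HasSum (fun n => ∑ j ∈ Finset.range k, b n * (ω ^ j * z) ^ n)
        (∑ j ∈ Finset.range k, g (ω ^ j * z)) :=
      hasSum_sum fun j _ => hg _ (hmem j)
    -- termwise identity
    have hterm : ∀ n : ℕ, (∑ j ∈ Finset.range k, b n * (ω ^ j * z) ^ n)
        = (k:ℂ) * (if k ∣ n then b n * z ^ n else 0) := by
      intro n
      have h1 : ∀ j : ℕ, b n * (ω ^ j * z) ^ n = b n * z ^ n * ((ω ^ n) ^ j) := by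
        intro j; rw [mul_pow, ← pow_mul, ← pow_mul, Nat.mul_comm j n, pow_mul]; ring
      simp only [h1, ← Finset.mul_sum]
      by_cases hdvd : k ∣ n
      · rw [if_pos hdvd]
        have : ω ^ n = 1 := (hprim.pow_eq_one_iff_dvd n).mpr hdvd
        simp [this, mul_comm]
      · rw [if_neg hdvd]
        have hne1 : ω ^ n ≠ 1 := fun hcon => hdvd ((hprim.pow_eq_one_iff_dvd n).mp hcon)
        rw [geom_sum_eq hne1]
        have : (ω ^ n) ^ k = 1 := by rw [← pow_mul, Nat.mul_comm n k, pow_mul, hωk, one_pow]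
        rw [this, sub_self, zero_div, mul_zero, mul_zero]
    -- HasSum for H at w via the injection j ↦ j * k
    have hinj : Function.Injective (fun j : ℕ => j * k) := fun i j hij => by
      simpa [Nat.mul_left_inj hk0] using hij
    have hzk : z ^ k ∈ Metric.ball (0:ℂ) 1 := by
      simp only [mem_ball, dist_zero_right, norm_pow]
      exact pow_lt_one₀ (norm_nonneg z) hzn hk0
    have hHs : HasSum (fun j => d j * (z ^ k) ^ j) (H w) := by
      rw [← hzw]; exact hH _ hzk
    have hHs2 : HasSum (fun n => if k ∣ n then b n * z ^ n else 0) (H w) := by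
      refine (Function.Injective.hasSum_iff hinj ?_).mp ?_
      · intro n hn
        rw [if_neg]
        intro hdvd
        obtain ⟨j, rfl⟩ := hdvd
        exact hn ⟨j, (Nat.mul_comm k j) ▸ rfl⟩
      · refine hHs.congr_fun fun j => ?_
        simp only [Function.comp_apply, if_pos (dvd_mul_left k j), hd]
        rw [← pow_mul, Nat.mul_comm j k]
    have hSid : (∑ j ∈ Finset.range k, g (ω ^ j * z)) = (k:ℂ) * H w := by
      refine hS.unique ?_
      have := hHs2.mul_left (k:ℂ)
      exact this.congr_fun fun n => (hterm n)
    have hnormS : ‖∑ j ∈ Finset.range k, g (ω ^ j * z)‖ ≤ k := by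
      calc ‖∑ j ∈ Finset.range k, g (ω ^ j * z)‖
          ≤ ∑ j ∈ Finset.range k, ‖g (ω ^ j * z)‖ := norm_sum_le _ _
        _ ≤ ∑ _j ∈ Finset.range k, (1:ℝ) := by
            exact Finset.sum_le_sum fun j _ => hbd _ (hmem j)
        _ = k := by simp
    rw [hSid, norm_mul, Complex.norm_natCast] at hnormS
    have hkpos : (0:ℝ) < k := by exact_mod_cast Nat.pos_of_ne_zero hk0
    exact (mul_le_iff_le_one_right hkpos).mp hnormS
  -- apply Schwarz--Pick to (d, H)
  have := mySchwarzPick hH hHbd (by simpa [hd] using hb0)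
  simpa [hd] using this

end BohrAux

open FormalMultilinearSeries Complex in
set_option maxHeartbeats 1000000 in
theorem bohr_radius_normalized_mth_derivative_initial_coefficient_lower_bound
    (m : ℕ) (a : ℝ) (ha0 : 0 ≤ a) (ha1 : a < 1)
    (f : ℂ → ℂ) (A : ℕ → ℂ)
    (hrep : ∀ z ∈ Metric.ball (0 : ℂ) 1, HasSum (fun n : ℕ => A n * z ^ n) (f z))
    (hvan : ∀ n, n < m → A n = 0)
    (hbd : ∀ z ∈ Metric.ball (0 : ℂ) 1, ‖f z‖ ≤ 1)
    (ham : ‖A m‖ = a) :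
    ∀ r : ℝ, 0 ≤ r → r ≤ 1 - ((1 + a) / (2 + a)) ^ ((1 : ℝ) / ((m : ℝ) + 1)) →
      Summable (fun n : ℕ => (Nat.choose (n + m) m : ℝ) * ‖A (n + m)‖ * r ^ n) ∧
      ∑' n : ℕ, (Nat.choose (n + m) m : ℝ) * ‖A (n + m)‖ * r ^ n ≤ 1 := by
  intro r hr0 hrq
  -- basic facts about q
  set q : ℝ := ((1 + a) / (2 + a)) ^ ((1 : ℝ) / ((m : ℝ) + 1)) with hq
  have hfrac0 : (0:ℝ) < (1 + a) / (2 + a) := by positivity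
  have hfrac1 : (1 + a) / (2 + a) < 1 := by
    rw [div_lt_one (by linarith)]; linarith
  have hq0 : 0 < q := Real.rpow_pos_of_pos hfrac0 _
  have hq1 : q < 1 := by
    rw [hq]
    calc ((1 + a) / (2 + a)) ^ ((1 : ℝ) / ((m : ℝ) + 1)) < 1 ^ ((1 : ℝ) / ((m : ℝ) + 1)) := by
          refine Real.rpow_lt_rpow hfrac0.le hfrac1 (by positivity)
      _ = 1 := Real.one_rpow _
  have hr1 : r < 1 := lt_of_le_of_lt hrq (by linarith)
  have hrn : ‖r‖ < 1 := by rwa [Real.norm_eq_abs, _root_.abs_of_nonneg hr0]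
  -- coefficient bounds
  have hA1 : ∀ n, ‖A n‖ ≤ 1 := myCauchyBound hrep hbd
  obtain ⟨g, hg, hgbd⟩ := myShift hrep hvan hbd
  have hb0lt : ‖A (0 + m)‖ < 1 := by rwa [Nat.zero_add, ham]
  have hbig : ∀ k, 1 ≤ k → ‖A (k + m)‖ ≤ 1 - a ^ 2 := by
    intro k hk
    have := myHigherCoeff hg hgbd hb0lt k hk
    rwa [Nat.zero_add, ham] at this
  -- summability
  have hsumC : Summable (fun n : ℕ => ((n + m).choose m : ℝ) * r ^ n) :=
    summable_choose_mul_geometric_of_norm_lt_one m hrn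
  have hTsum : HasSum (fun n : ℕ => ((n + m).choose m : ℝ) * r ^ n)
      (1 / (1 - r) ^ (m + 1)) := hasSum_choose_mul_geometric_of_norm_lt_one m hrn
  set u : ℕ → ℝ := fun n => ((n + m).choose m : ℝ) * ‖A (n + m)‖ * r ^ n with hu
  have hunn : ∀ n, 0 ≤ u n := fun n => by positivity
  have hule : ∀ n, u n ≤ ((n + m).choose m : ℝ) * r ^ n := by
    intro n
    rw [hu]
    calc ((n + m).choose m : ℝ) * ‖A (n + m)‖ * r ^ n
        ≤ ((n + m).choose m : ℝ) * 1 * r ^ n := by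
          refine mul_le_mul_of_nonneg_right (mul_le_mul_of_nonneg_left (hA1 _)
            (by positivity)) (by positivity)
      _ = ((n + m).choose m : ℝ) * r ^ n := by ring
  have husum : Summable u := Summable.of_nonneg_of_le hunn hule hsumC
  refine ⟨husum, ?_⟩
  -- bound on T
  have hrq' : q ≤ 1 - r := by linarith
  have hpow : (1 + a) / (2 + a) ≤ (1 - r) ^ (m + 1) := by
    have h1 : q ^ (m + 1) ≤ (1 - r) ^ (m + 1) :=
      pow_le_pow_left₀ hq0.le hrq' (m + 1)
    have h2 : q ^ (m + 1) = (1 + a) / (2 + a) := by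
      rw [hq, ← Real.rpow_natCast (((1 + a) / (2 + a)) ^ ((1 : ℝ) / ((m : ℝ) + 1))) (m + 1),
        ← Real.rpow_mul hfrac0.le]
      rw [show (1 : ℝ) / ((m : ℝ) + 1) * ((m : ℕ) + 1 : ℕ) = 1 by
        push_cast
        field_simp]
      exact Real.rpow_one _
    linarith
  have hT : 1 / (1 - r) ^ (m + 1) ≤ (2 + a) / (1 + a) := by
    rw [div_le_div_iff₀ (pow_pos (by linarith) _) (by positivity)]
    calc 1 * (1 + a) = 1 + a := one_mul _
      _ ≤ (2 + a) * ((1 + a) / (2 + a)) := by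
          rw [mul_div_cancel₀]
          linarith
      _ ≤ (2 + a) * (1 - r) ^ (m + 1) := by
          refine mul_le_mul_of_nonneg_left hpow (by linarith)
  -- sum splitting
  have hsplit : ∑' n, u n = u 0 + ∑' n, u (n + 1) := Summable.tsum_eq_zero_add husum
  have hTsplit : (1 / (1 - r) ^ (m + 1)) = 1 + ∑' n : ℕ, (((n + 1) + m).choose m : ℝ) * r ^ (n + 1) := by
    have := Summable.tsum_eq_zero_add hsumC
    rw [hTsum.tsum_eq] at this
    simpa using this
  have hu0 : u 0 = a := by
    rw [hu]
    simp [Nat.zero_add, ham]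
  have hshift_sum : Summable (fun n : ℕ => (((n + 1) + m).choose m : ℝ) * r ^ (n + 1)) :=
    (summable_nat_add_iff 1).mpr hsumC
  have hushift : Summable (fun n : ℕ => u (n + 1)) := (summable_nat_add_iff 1).mpr husum
  have htail : ∑' n, u (n + 1) ≤ (1 - a ^ 2) * ∑' n : ℕ, (((n + 1) + m).choose m : ℝ) * r ^ (n + 1) := by
    rw [← tsum_mul_left]
    refine Summable.tsum_le_tsum ?_ hushift (hshift_sum.mul_left _)
    intro n
    rw [hu]
    calc (((n + 1) + m).choose m : ℝ) * ‖A ((n + 1) + m)‖ * r ^ (n + 1)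
        ≤ (((n + 1) + m).choose m : ℝ) * (1 - a ^ 2) * r ^ (n + 1) := by
          refine mul_le_mul_of_nonneg_right (mul_le_mul_of_nonneg_left
            (hbig (n + 1) (by omega)) (by positivity)) (by positivity)
      _ = (1 - a ^ 2) * ((((n + 1) + m).choose m : ℝ) * r ^ (n + 1)) := by ring
  have htail2 : ∑' n : ℕ, (((n + 1) + m).choose m : ℝ) * r ^ (n + 1) ≤ 1 / (1 + a) := by
    have : ∑' n : ℕ, (((n + 1) + m).choose m : ℝ) * r ^ (n + 1)
        = 1 / (1 - r) ^ (m + 1) - 1 := by linarith [hTsplit]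
    rw [this]
    have : (2 + a) / (1 + a) - 1 = 1 / (1 + a) := by
      rw [div_sub_one (by linarith : (1:ℝ) + a ≠ 0)]
      congr 1
      ring
    linarith [hT]
  have ha2 : 0 ≤ 1 - a ^ 2 := by nlinarith
  calc ∑' n, u n = u 0 + ∑' n, u (n + 1) := hsplit
    _ ≤ a + (1 - a ^ 2) * (1 / (1 + a)) := by
        rw [hu0]
        refine add_le_add (le_refl a) (le_trans htail ?_)
        exact mul_le_mul_of_nonneg_left htail2 ha2
    _ = 1 := by
        have h1a : (1:ℝ) + a ≠ 0 := by linarith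
        field_simp
        ring
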